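/- Let α ∈ (0,1], let Ω be a bounded open subset of ℝⁿ of class C^{1,α} with outward unit normal ν, and let T be an invertible real n×n matrix. Then the kernel (x,y) ↦ (ν_h(x) − ν_h(y))/|T^{−1}(x−y)|^{n}, for (x,y) ∈ (∂Ω×∂Ω) minus the diagonal, belongs to the kernel class K_{n−α, n, α}(∂Ω×∂Ω), for each h ∈ {1,…,n}. -/

import Mathlib

open Set Metric

noncomputable section

abbrev Euc (n : ℕ) := EuclideanSpace ℝ (Fin n)

/-- The set of values `‖x-y‖^s * ‖K x y‖` over distinct points of `X × Y`. -/
def kSet1 {n : ℕ} (X Y : Set (Euc n)) (s : ℝ) (K : Euc n → Euc n → ℂ) : Set ℝ :=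
  {c | ∃ x ∈ X, ∃ y ∈ Y, x ≠ y ∧ c = ‖x - y‖ ^ s * ‖K x y‖}

/-- The set of values of the Hölder–type quotient of a kernel. -/
def kSet2 {n : ℕ} (X Y : Set (Euc n)) (s₂ s₃ : ℝ) (K : Euc n → Euc n → ℂ) : Set ℝ :=
  {c | ∃ x' ∈ X, ∃ x'' ∈ X, x' ≠ x'' ∧ ∃ y ∈ Y, 2 * ‖x' - x''‖ ≤ ‖x' - y‖ ∧
       c = ‖x' - y‖ ^ s₂ / ‖x' - x''‖ ^ s₃ * ‖K x' y - K x'' y‖}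

/-- Membership in the class `𝒦_{s₁,s₂,s₃}(X×Y)` of potential type kernels. -/
def memK {n : ℕ} (X Y : Set (Euc n)) (s₁ s₂ s₃ : ℝ) (K : Euc n → Euc n → ℂ) : Prop :=
  ContinuousOn (fun p : Euc n × Euc n => K p.1 p.2)
      ((X ×ˢ Y) \ {p : Euc n × Euc n | p.1 = p.2}) ∧
  BddAbove (kSet1 X Y s₁ K) ∧ BddAbove (kSet2 X Y s₂ s₃ K)

/-- The norm of the class `𝒦_{s₁,s₂,s₃}(X×Y)`. -/
def kNorm {n : ℕ} (X Y : Set (Euc n)) (s₁ s₂ s₃ : ℝ) (K : Euc n → Euc n → ℂ) : ℝ :=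
  sSup (kSet1 X Y s₁ K) + sSup (kSet2 X Y s₂ s₃ K)

/-- A bounded open subset of `ℝⁿ` of class `C^{1,α}`, together with its outward unit
normal field `ν`: near each boundary point, `Ω` is the sublevel set of a `C^{1,α}`
defining function with nonvanishing gradient, and `ν` is the normalized gradient. -/
def IsC1AlphaDomainWithNormal {n : ℕ} (α : ℝ) (Ω : Set (Euc n)) (ν : Euc n → Euc n) : Prop :=
  IsOpen Ω ∧ Bornology.IsBounded Ω ∧ Ω.Nonempty ∧
  ∀ x ∈ frontier Ω, ∃ r > (0 : ℝ), ∃ f : Euc n → ℝ,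
    ContDiffOn ℝ 1 f (ball x r) ∧
    (∃ c : ℝ, ∀ y ∈ ball x r, ∀ z ∈ ball x r,
        ‖fderiv ℝ f y - fderiv ℝ f z‖ ≤ c * ‖y - z‖ ^ α) ∧
    (∀ y ∈ ball x r, gradient f y ≠ 0) ∧
    Ω ∩ ball x r = {y | f y < 0} ∩ ball x r ∧
    ∀ y ∈ frontier Ω ∩ ball x r, ν y = ‖gradient f y‖⁻¹ • gradient f y


lemma coord_abs_le_norm {n : ℕ} (v : Euc n) (h : Fin n) : |v h| ≤ ‖v‖ := by
  rw [EuclideanSpace.norm_eq, ← Real.sqrt_sq_eq_abs]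
  apply Real.sqrt_le_sqrt
  simp only [Real.norm_eq_abs, sq_abs]
  exact Finset.single_le_sum (f := fun i => v i ^ 2) (fun i _ => sq_nonneg _) (Finset.mem_univ h)

lemma normalize_sub_normalize_le {E : Type*} [NormedAddCommGroup E] [NormedSpace ℝ E]
    {a b : E} (ha : a ≠ 0) (hb : b ≠ 0) :
    ‖‖a‖⁻¹ • a - ‖b‖⁻¹ • b‖ ≤ 2 * ‖a - b‖ / ‖a‖ := by
  have ha' : (0:ℝ) < ‖a‖ := norm_pos_iff.mpr ha
  have hb' : (0:ℝ) < ‖b‖ := norm_pos_iff.mpr hb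
  have key : ‖a‖⁻¹ • a - ‖b‖⁻¹ • b = ‖a‖⁻¹ • (a - b) + (‖a‖⁻¹ - ‖b‖⁻¹) • b := by
    rw [smul_sub, sub_smul]; abel
  rw [key]
  have h1 : ‖(‖a‖⁻¹ - ‖b‖⁻¹) • b‖ ≤ ‖a - b‖ / ‖a‖ := by
    rw [norm_smul, Real.norm_eq_abs, inv_sub_inv ha'.ne' hb'.ne', abs_div,
      abs_of_pos (mul_pos ha' hb')]
    have h2 : |‖b‖ - ‖a‖| ≤ ‖a - b‖ := by
      rw [norm_sub_rev]; exact abs_norm_sub_norm_le b a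
    calc |‖b‖ - ‖a‖| / (‖a‖ * ‖b‖) * ‖b‖ = |‖b‖ - ‖a‖| / ‖a‖ := by
            field_simp
      _ ≤ ‖a - b‖ / ‖a‖ := by gcongr
  calc ‖‖a‖⁻¹ • (a - b) + (‖a‖⁻¹ - ‖b‖⁻¹) • b‖
      ≤ ‖‖a‖⁻¹ • (a - b)‖ + ‖(‖a‖⁻¹ - ‖b‖⁻¹) • b‖ := norm_add_le _ _
    _ ≤ ‖a - b‖ / ‖a‖ + ‖a - b‖ / ‖a‖ := by
        apply add_le_add _ h1
        rw [norm_smul, Real.norm_eq_abs, abs_of_pos (inv_pos.mpr ha')]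
        rw [inv_mul_eq_div]
    _ = 2 * ‖a - b‖ / ‖a‖ := by ring

lemma pow_sub_pow_abs_le {a b R : ℝ} (ha : 0 ≤ a) (hb : 0 ≤ b)
    (haR : a ≤ R) (hbR : b ≤ R) (n : ℕ) :
    |a ^ n - b ^ n| ≤ n * R ^ (n - 1) * |a - b| := by
  have hR : 0 ≤ R := le_trans ha haR
  rw [← geom_sum₂_mul a b n, abs_mul]
  have hsum : |∑ i ∈ Finset.range n, a ^ i * b ^ (n - 1 - i)| ≤ n * R ^ (n - 1) := by
    calc |∑ i ∈ Finset.range n, a ^ i * b ^ (n - 1 - i)|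
        ≤ ∑ i ∈ Finset.range n, |a ^ i * b ^ (n - 1 - i)| := Finset.abs_sum_le_sum_abs _ _
      _ ≤ ∑ _i ∈ Finset.range n, R ^ (n - 1) := by
          apply Finset.sum_le_sum
          intro i hi
          rw [Finset.mem_range] at hi
          rw [abs_mul, abs_of_nonneg (pow_nonneg ha i), abs_of_nonneg (pow_nonneg hb _)]
          have : a ^ i * b ^ (n - 1 - i) ≤ R ^ i * R ^ (n - 1 - i) := by
            apply mul_le_mul (pow_le_pow_left₀ ha haR i) (pow_le_pow_left₀ hb hbR _)
              (pow_nonneg hb _) (pow_nonneg hR i)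
          refine this.trans ?_
          rw [← pow_add]
          have : i + (n - 1 - i) = n - 1 := by omega
          rw [this]
      _ = n * R ^ (n - 1) := by rw [Finset.sum_const, Finset.card_range, nsmul_eq_mul]
  exact mul_le_mul_of_nonneg_right hsum (abs_nonneg _)

lemma rpow_mul_le {α d e : ℝ} (hα : α ∈ Ioc (0:ℝ) 1) (hd : 0 < d) (he : 0 < e) (hed : e ≤ d) :
    d ^ α * e ≤ e ^ α * d := by
  have h1 : e ^ (1 - α) ≤ d ^ (1 - α) :=
    Real.rpow_le_rpow he.le hed (by linarith [hα.2])
  have he' : e = e ^ α * e ^ (1 - α) := by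
    rw [← Real.rpow_add he]; norm_num
  have hd' : d = d ^ α * d ^ (1 - α) := by
    rw [← Real.rpow_add hd]; norm_num
  calc d ^ α * e = d ^ α * e ^ α * e ^ (1 - α) := by rw [mul_assoc, ← he']
    _ ≤ d ^ α * e ^ α * d ^ (1 - α) := by
        apply mul_le_mul_of_nonneg_left h1
        positivity
    _ = e ^ α * d := by rw [mul_comm (d ^ α) (e ^ α), mul_assoc, ← hd']



lemma gradient_continuousOn {n : ℕ} {f : Euc n → ℝ} {s : Set (Euc n)}
    (hf : ContDiffOn ℝ 1 f s) (hs : IsOpen s) : ContinuousOn (gradient f) s := by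
  have hfd : ContinuousOn (fderiv ℝ f) s := hf.continuousOn_fderiv_of_isOpen hs le_rfl
  exact (InnerProductSpace.toDual ℝ (Euc n)).symm.continuous.comp_continuousOn hfd

lemma gradient_sub_norm {n : ℕ} {f : Euc n → ℝ} (y z : Euc n) :
    ‖gradient f y - gradient f z‖ = ‖fderiv ℝ f y - fderiv ℝ f z‖ := by
  rw [gradient, gradient, ← map_sub, LinearIsometryEquiv.norm_map]

lemma nu_norm_one {n : ℕ} {α : ℝ} {Ω : Set (Euc n)} {ν : Euc n → Euc n} (hΩ : IsC1AlphaDomainWithNormal α Ω ν) {x : Euc n} (hx : x ∈ frontier Ω) :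
    ‖ν x‖ = 1 := by
  obtain ⟨r, hr, f, -, -, hg, -, hν⟩ := hΩ.2.2.2 x hx
  have hxb : x ∈ ball x r := mem_ball_self hr
  have hgx := hg x hxb
  rw [hν x ⟨hx, hxb⟩, norm_smul, Real.norm_eq_abs,
    abs_of_pos (inv_pos.mpr (norm_pos_iff.mpr hgx)), inv_mul_cancel₀ (norm_ne_zero_iff.mpr hgx)]

lemma nu_continuousOn {n : ℕ} {α : ℝ} {Ω : Set (Euc n)} {ν : Euc n → Euc n} (hΩ : IsC1AlphaDomainWithNormal α Ω ν) :
    ContinuousOn ν (frontier Ω) := by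
  intro x hx
  obtain ⟨r, hr, f, hf1, -, hg, -, hν⟩ := hΩ.2.2.2 x hx
  have hgc : ContinuousOn (gradient f) (ball x r) := gradient_continuousOn hf1 isOpen_ball
  have hgx : ContinuousAt (gradient f) x :=
    hgc.continuousAt (isOpen_ball.mem_nhds (mem_ball_self hr))
  have hne : ‖gradient f x‖ ≠ 0 := norm_ne_zero_iff.mpr (hg x (mem_ball_self hr))
  have hca : ContinuousAt (fun y => ‖gradient f y‖⁻¹ • gradient f y) x :=
    (hgx.norm.inv₀ hne).smul hgx
  have h1 : ContinuousWithinAt ν (frontier Ω ∩ ball x r) x := by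
    apply hca.continuousWithinAt.congr
    · intro y hy; exact hν y hy
    · exact hν x ⟨hx, mem_ball_self hr⟩
  exact h1.mono_of_mem_nhdsWithin (inter_mem_nhdsWithin _ (isOpen_ball.mem_nhds (mem_ball_self hr)))


lemma nu_local_holder {n : ℕ} {α : ℝ} {Ω : Set (Euc n)} {ν : Euc n → Euc n} (hΩ : IsC1AlphaDomainWithNormal α Ω ν) :
    ∀ x ∈ frontier Ω, ∃ ρ > (0:ℝ), ∃ C, 0 ≤ C ∧
      ∀ y ∈ frontier Ω ∩ ball x ρ, ∀ z ∈ frontier Ω ∩ ball x ρ,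
        ‖ν y - ν z‖ ≤ C * ‖y - z‖ ^ α := by
  intro x hx
  obtain ⟨r, hr, f, hf1, ⟨c, hc⟩, hg, -, hν⟩ := hΩ.2.2.2 x hx
  have hgc : ContinuousOn (gradient f) (ball x r) := gradient_continuousOn hf1 isOpen_ball
  have hcb : closedBall x (r/2) ⊆ ball x r := closedBall_subset_ball (by linarith)
  obtain ⟨y₀, hy₀, hmin'⟩ := (isCompact_closedBall x (r/2)).exists_isMinOn
    ⟨x, mem_closedBall_self (by positivity)⟩
    (continuous_norm.comp_continuousOn (hgc.mono hcb))
  have hmin := isMinOn_iff.mp hmin'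
  set m := ‖gradient f y₀‖ with hm
  have hm0 : 0 < m := norm_pos_iff.mpr (hg y₀ (hcb hy₀))
  refine ⟨r/2, by positivity, 2 * max c 0 / m, by positivity, ?_⟩
  rintro y ⟨hyS, hyb⟩ z ⟨hzS, hzb⟩
  have hyb' : y ∈ ball x r := ball_subset_ball (by linarith) hyb
  have hzb' : z ∈ ball x r := ball_subset_ball (by linarith) hzb
  have hgy := hg y hyb'
  have hgz := hg z hzb'
  rw [hν y ⟨hyS, hyb'⟩, hν z ⟨hzS, hzb'⟩]
  have hgyz : ‖gradient f y - gradient f z‖ ≤ max c 0 * ‖y - z‖ ^ α := by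
    rw [gradient_sub_norm]
    calc ‖fderiv ℝ f y - fderiv ℝ f z‖ ≤ c * ‖y - z‖ ^ α := hc y hyb' z hzb'
      _ ≤ max c 0 * ‖y - z‖ ^ α := by
          apply mul_le_mul_of_nonneg_right (le_max_left c 0) (Real.rpow_nonneg (norm_nonneg _) α)
  calc ‖‖gradient f y‖⁻¹ • gradient f y - ‖gradient f z‖⁻¹ • gradient f z‖
      ≤ 2 * ‖gradient f y - gradient f z‖ / ‖gradient f y‖ := normalize_sub_normalize_le hgy hgz
    _ ≤ 2 * ‖gradient f y - gradient f z‖ / m := by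
        apply div_le_div_of_nonneg_left (by positivity) hm0
        exact hmin y (ball_subset_closedBall hyb)
    _ ≤ 2 * (max c 0 * ‖y - z‖ ^ α) / m := by gcongr
    _ = 2 * max c 0 / m * ‖y - z‖ ^ α := by ring

lemma nu_global_holder {n : ℕ} {α : ℝ} {Ω : Set (Euc n)} {ν : Euc n → Euc n} (hα : α ∈ Ioc (0:ℝ) 1) (hΩ : IsC1AlphaDomainWithNormal α Ω ν) :
    ∃ C, 0 ≤ C ∧ ∀ x ∈ frontier Ω, ∀ y ∈ frontier Ω, ‖ν x - ν y‖ ≤ C * ‖x - y‖ ^ α := by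
  rcases (frontier Ω).eq_empty_or_nonempty with hS | ⟨s₀, hs₀⟩
  · exact ⟨0, le_refl 0, fun x hx => by rw [hS] at hx; exact absurd hx (notMem_empty x)⟩
  have hScpt : IsCompact (frontier Ω) := by
    have hbd : Bornology.IsBounded (closure Ω) := hΩ.2.1.closure
    exact Metric.isCompact_of_isClosed_isBounded isClosed_frontier
      (hbd.subset frontier_subset_closure)
  choose! ρ hρ C hC hH using nu_local_holder hΩ
  obtain ⟨t, htS, htcov⟩ := hScpt.elim_nhds_subcover (fun x => ball x (ρ x / 2))
    (fun x hx => ball_mem_nhds x (by have := hρ x hx; linarith))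
  have htne : t.Nonempty := by
    have := htcov hs₀
    simp only [Set.mem_iUnion] at this
    obtain ⟨x, hx, -⟩ := this
    exact ⟨x, hx⟩
  set δ := t.inf' htne (fun x => ρ x / 2) with hδdef
  have hδ : 0 < δ := by
    rw [hδdef, Finset.lt_inf'_iff]
    intro b hb; have := hρ b (htS b hb); linarith
  set C0 := t.sup' htne C with hC0def
  refine ⟨max C0 (2 / δ ^ α), le_max_of_le_right (by positivity), ?_⟩
  intro x hx y hy
  rcases eq_or_ne x y with rfl | hxy
  · simp [Real.zero_rpow hα.1.ne']
  have hxyp : (0:ℝ) < ‖x - y‖ := norm_sub_pos_iff.mpr hxy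
  have hrnn : (0:ℝ) ≤ ‖x - y‖ ^ α := Real.rpow_nonneg hxyp.le α
  rcases lt_or_ge ‖x - y‖ δ with hlt | hge
  · have := htcov hx
    simp only [Set.mem_iUnion] at this
    obtain ⟨x₀, hx₀t, hx₀b⟩ := this
    have hδle : δ ≤ ρ x₀ / 2 := Finset.inf'_le _ hx₀t
    have hxb : x ∈ ball x₀ (ρ x₀) := ball_subset_ball (by linarith) hx₀b
    have hyb : y ∈ ball x₀ (ρ x₀) := by
      rw [mem_ball] at hx₀b ⊢
      have h1 : dist y x₀ ≤ dist y x + dist x x₀ := dist_triangle y x x₀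
      have h2 : dist y x = ‖x - y‖ := by rw [dist_eq_norm, norm_sub_rev]
      linarith
    calc ‖ν x - ν y‖ ≤ C x₀ * ‖x - y‖ ^ α := hH x₀ (htS x₀ hx₀t) x ⟨hx, hxb⟩ y ⟨hy, hyb⟩
      _ ≤ max C0 (2 / δ ^ α) * ‖x - y‖ ^ α := by
          apply mul_le_mul_of_nonneg_right _ hrnn
          exact le_max_of_le_left (Finset.le_sup' C hx₀t)
  · have hδα : (0:ℝ) < δ ^ α := Real.rpow_pos_of_pos hδ α
    calc ‖ν x - ν y‖ ≤ ‖ν x‖ + ‖ν y‖ := norm_sub_le _ _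
      _ = 2 := by rw [nu_norm_one hΩ hx, nu_norm_one hΩ hy]; norm_num
      _ ≤ 2 / δ ^ α * ‖x - y‖ ^ α := by
          rw [div_mul_eq_mul_div, le_div_iff₀ hδα]
          have h1 : δ ^ α ≤ ‖x - y‖ ^ α := Real.rpow_le_rpow hδ.le hge hα.1.le
          nlinarith
      _ ≤ max C0 (2 / δ ^ α) * ‖x - y‖ ^ α :=
          mul_le_mul_of_nonneg_right (le_max_right _ _) hrnn

/-- If `α ∈ (0,1]`, `Ω ⊆ ℝⁿ` is a bounded open set of class `C^{1,α}` with outward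
unit normal `ν` and `T` is an invertible real `n×n` matrix, then for each component
`h` the kernel `(ν_h(x) - ν_h(y))/|T⁻¹(x-y)|ⁿ` belongs to
`𝒦_{n-α,n,α}(∂Ω×∂Ω)`. -/
lemma coord_abs_sub_le {n : ℕ} (v w : Euc n) (h : Fin n) : |v h - w h| ≤ ‖v - w‖ := by
  have := coord_abs_le_norm (v - w) h
  simpa using this

set_option maxHeartbeats 1000000 in
theorem stmt_18 {n : ℕ} (α : ℝ) (hα : α ∈ Ioc (0 : ℝ) 1)
    (Ω : Set (Euc n)) (ν : Euc n → Euc n)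
    (hΩ : IsC1AlphaDomainWithNormal α Ω ν)
    (T : Euc n ≃ₗ[ℝ] Euc n) (h : Fin n) :
    memK (frontier Ω) (frontier Ω) ((n : ℝ) - α) (n : ℝ) α
      (fun x y => ((ν x h - ν y h : ℝ) : ℂ) / ((‖T.symm (x - y)‖ ^ n : ℝ) : ℂ)) := by
  have hn : 0 < n := h.pos
  obtain ⟨C, hC0, hC⟩ := nu_global_holder hα hΩ
  set Tc : Euc n →L[ℝ] Euc n := LinearMap.toContinuousLinearMap (T : Euc n →ₗ[ℝ] Euc n) with hTcdef
  set Tc' : Euc n →L[ℝ] Euc n :=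
    LinearMap.toContinuousLinearMap (T.symm : Euc n →ₗ[ℝ] Euc n) with hTc'def
  set M := ‖Tc‖ with hMdef
  set M' := ‖Tc'‖ with hM'def
  have hM0 : 0 ≤ M := norm_nonneg _
  have hM'0 : 0 ≤ M' := norm_nonneg _
  have hlow : ∀ z : Euc n, ‖z‖ ≤ M * ‖T.symm z‖ := by
    intro z
    calc ‖z‖ = ‖Tc (T.symm z)‖ := by
          rw [hTcdef]; simp
      _ ≤ M * ‖T.symm z‖ := Tc.le_opNorm _
  have hup : ∀ z : Euc n, ‖T.symm z‖ ≤ M' * ‖z‖ := by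
    intro z
    calc ‖T.symm z‖ = ‖Tc' z‖ := by rw [hTc'def]; simp
      _ ≤ M' * ‖z‖ := Tc'.le_opNorm _
  refine ⟨?_, ?_, ?_⟩
  · -- continuity
    have hνc : ContinuousOn ν (frontier Ω) := nu_continuousOn hΩ
    set D := ((frontier Ω) ×ˢ (frontier Ω)) \ {p : Euc n × Euc n | p.1 = p.2} with hD
    have hD1 : ContinuousOn (fun p : Euc n × Euc n => ((ν p.1 h - ν p.2 h : ℝ) : ℂ)) D := by
      apply Complex.continuous_ofReal.comp_continuousOn
      apply ContinuousOn.sub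
      · exact ((continuous_apply h).comp (PiLp.continuous_ofLp 2 _)).comp_continuousOn
          (hνc.comp continuousOn_fst (fun p hp => hp.1.1))
      · exact ((continuous_apply h).comp (PiLp.continuous_ofLp 2 _)).comp_continuousOn
          (hνc.comp continuousOn_snd (fun p hp => hp.1.2))
    have hD2 : ContinuousOn (fun p : Euc n × Euc n => ((‖T.symm (p.1 - p.2)‖ ^ n : ℝ) : ℂ)) D := by
      apply Complex.continuous_ofReal.comp_continuousOn
      apply Continuous.continuousOn
      have hTs : Continuous fun p : Euc n × Euc n => T.symm (p.1 - p.2) := by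
        exact (LinearMap.toContinuousLinearMap (T.symm : Euc n →ₗ[ℝ] Euc n)).continuous.comp
          (continuous_fst.sub continuous_snd)
      exact hTs.norm.pow n
    exact hD1.div hD2 (fun p hp => by
      have hne : p.1 - p.2 ≠ 0 := sub_ne_zero.mpr hp.2
      have hTne : T.symm (p.1 - p.2) ≠ 0 := by
        rw [LinearEquiv.map_ne_zero_iff]; exact hne
      exact Complex.ofReal_ne_zero.mpr (pow_ne_zero n (norm_ne_zero_iff.mpr hTne)))
  · -- kSet1
    refine ⟨C * M ^ n, ?_⟩
    rintro c ⟨x, hx, y, hy, hxy, rfl⟩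
    set d := ‖x - y‖ with hddef
    have hd0 : 0 < d := norm_sub_pos_iff.mpr hxy
    have hz : T.symm (x - y) ≠ 0 := by
      rw [LinearEquiv.map_ne_zero_iff]; exact sub_ne_zero.mpr hxy
    set a := ‖T.symm (x - y)‖ with hadef
    have ha0 : 0 < a := norm_pos_iff.mpr hz
    have hda : d ≤ M * a := hlow (x - y)
    have hdan : d ^ n ≤ M ^ n * a ^ n := by
      calc d ^ n ≤ (M * a) ^ n := pow_le_pow_left₀ hd0.le hda n
        _ = M ^ n * a ^ n := mul_pow M a n
    have hnorm : ‖(((ν x h - ν y h : ℝ)) : ℂ) / ((a ^ n : ℝ) : ℂ)‖ = |ν x h - ν y h| / a ^ n := by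
      rw [norm_div, Complex.norm_real, Complex.norm_real, Real.norm_eq_abs, Real.norm_eq_abs,
        abs_of_pos (pow_pos ha0 n)]
    have hp : |ν x h - ν y h| ≤ C * d ^ α :=
      (coord_abs_sub_le (ν x) (ν y) h).trans (hC x hx y hy)
    have hdd : d ^ ((n:ℝ) - α) * d ^ α = d ^ n := by
      rw [← Real.rpow_add hd0, sub_add_cancel, Real.rpow_natCast]
    calc d ^ ((n:ℝ) - α) * ‖(((ν x h - ν y h : ℝ)) : ℂ) / ((a ^ n : ℝ) : ℂ)‖
        = d ^ ((n:ℝ) - α) * (|ν x h - ν y h| / a ^ n) := by rw [hnorm]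
      _ ≤ d ^ ((n:ℝ) - α) * ((C * d ^ α) / a ^ n) := by gcongr
      _ = C * (d ^ n / a ^ n) := by rw [← hdd]; ring
      _ ≤ C * M ^ n := by
          apply mul_le_mul_of_nonneg_left _ hC0
          rw [div_le_iff₀ (pow_pos ha0 n)]
          exact hdan
  · -- kSet2
    set K1 := 2 * C * (n:ℝ) * (2*M') ^ (n-1) * M' * (M ^ n * (2*M) ^ n) with hK1def
    have hK1nn : 0 ≤ K1 := by
      rw [hK1def]
      apply mul_nonneg (mul_nonneg (mul_nonneg (mul_nonneg (by linarith) (Nat.cast_nonneg n))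
        (pow_nonneg (by linarith) _)) hM'0)
      exact mul_nonneg (pow_nonneg hM0 n) (pow_nonneg (by linarith) n)
    refine ⟨C * M ^ n + K1, ?_⟩
    rintro c ⟨x', hx', x'', hx'', hne, y, hy, hsep, rfl⟩
    set e := ‖x' - x''‖ with hedef
    set d := ‖x' - y‖ with hddef
    have he0 : 0 < e := norm_sub_pos_iff.mpr hne
    have hd0 : 0 < d := lt_of_lt_of_le (by linarith) hsep
    have hxy' : x' ≠ y := norm_sub_pos_iff.mp hd0
    set d' := ‖x'' - y‖ with hd'def
    have htri1 : d ≤ e + d' := by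
      rw [hddef, hedef, hd'def, ← dist_eq_norm, ← dist_eq_norm, ← dist_eq_norm]
      exact dist_triangle x' x'' y
    have htri2 : d' ≤ e + d := by
      rw [hddef, hedef, hd'def, ← dist_eq_norm, ← dist_eq_norm, ← dist_eq_norm]
      calc dist x'' y ≤ dist x'' x' + dist x' y := dist_triangle x'' x' y
        _ = dist x' x'' + dist x' y := by rw [dist_comm]
    have hd'low : d / 2 ≤ d' := by linarith
    have hd'up : d' ≤ 2 * d := by linarith
    have hd'0 : 0 < d' := by linarith
    have hx''y : x'' ≠ y := norm_sub_pos_iff.mp hd'0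
    have hza : T.symm (x' - y) ≠ 0 := by
      rw [LinearEquiv.map_ne_zero_iff]; exact sub_ne_zero.mpr hxy'
    have hzb : T.symm (x'' - y) ≠ 0 := by
      rw [LinearEquiv.map_ne_zero_iff]; exact sub_ne_zero.mpr hx''y
    set a := ‖T.symm (x' - y)‖ with hadef
    set b := ‖T.symm (x'' - y)‖ with hbdef
    have ha0 : 0 < a := norm_pos_iff.mpr hza
    have hb0 : 0 < b := norm_pos_iff.mpr hzb
    have hda : d ≤ M * a := hlow (x' - y)
    have hd'b : d' ≤ M * b := hlow (x'' - y)
    have hdb : d ≤ 2 * M * b := by nlinarith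
    have haup : a ≤ 2 * M' * d := by
      have := hup (x' - y); rw [← hadef, ← hddef] at this; nlinarith
    have hbup : b ≤ 2 * M' * d := by
      have := hup (x'' - y); rw [← hbdef, ← hd'def] at this; nlinarith
    have hab : |a - b| ≤ M' * e := by
      have h1 : |a - b| ≤ ‖T.symm (x' - y) - T.symm (x'' - y)‖ := abs_norm_sub_norm_le _ _
      have h2 : T.symm (x' - y) - T.symm (x'' - y) = T.symm (x' - x'') := by
        rw [← map_sub]; congr 1; abel
      rw [h2] at h1
      exact h1.trans (hup _)
    set p := ν x' h - ν y h with hpdef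
    set q := ν x'' h - ν y h with hqdef
    have hq : |q| ≤ 2 * C * d ^ α := by
      have h1 : |q| ≤ C * d' ^ α := (coord_abs_sub_le (ν x'') (ν y) h).trans (hC x'' hx'' y hy)
      have h2 : d' ^ α ≤ (2*d) ^ α := Real.rpow_le_rpow hd'0.le hd'up hα.1.le
      have h3 : (2*d) ^ α = 2 ^ α * d ^ α := Real.mul_rpow (by norm_num) hd0.le
      have h4 : (2:ℝ) ^ α ≤ 2 := by
        have := Real.rpow_le_rpow_of_exponent_le (one_le_two) hα.2
        rwa [Real.rpow_one] at this
      have h5 : (0:ℝ) ≤ d ^ α := Real.rpow_nonneg hd0.le α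
      calc |q| ≤ C * d' ^ α := h1
        _ ≤ C * (2 ^ α * d ^ α) := by rw [← h3]; exact mul_le_mul_of_nonneg_left h2 hC0
        _ ≤ C * (2 * d ^ α) := by
            apply mul_le_mul_of_nonneg_left _ hC0
            exact mul_le_mul_of_nonneg_right h4 h5
        _ = 2 * C * d ^ α := by ring
    have hpq : |p - q| ≤ C * e ^ α := by
      have heq : p - q = ν x' h - ν x'' h := by rw [hpdef, hqdef]; ring
      rw [heq]
      exact (coord_abs_sub_le (ν x') (ν x'') h).trans (hC x' hx' x'' hx'')
    have hban : |b ^ n - a ^ n| ≤ (n:ℝ) * (2*M'*d) ^ (n-1) * (M' * e) := by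
      have h1 := pow_sub_pow_abs_le hb0.le ha0.le hbup haup n
      apply h1.trans
      apply mul_le_mul_of_nonneg_left _ (by positivity)
      rw [abs_sub_comm]; exact hab
    -- norm of the kernel difference
    have hnorm : ‖(((p : ℝ)) : ℂ) / ((a ^ n : ℝ) : ℂ) - ((q : ℝ) : ℂ) / ((b ^ n : ℝ) : ℂ)‖
        = |p / a ^ n - q / b ^ n| := by
      rw [show (((p : ℝ)) : ℂ) / ((a ^ n : ℝ) : ℂ) - ((q : ℝ) : ℂ) / ((b ^ n : ℝ) : ℂ)
          = ((p / a ^ n - q / b ^ n : ℝ) : ℂ) by push_cast; ring]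
      rw [Complex.norm_real, Real.norm_eq_abs]
    have hPsplit : p / a ^ n - q / b ^ n
        = (p - q) / a ^ n + q * (b ^ n - a ^ n) / (a ^ n * b ^ n) := by
      field_simp
      ring
    have hPabs : |p / a ^ n - q / b ^ n|
        ≤ |p - q| / a ^ n + |q| * |b ^ n - a ^ n| / (a ^ n * b ^ n) := by
      rw [hPsplit]
      refine (abs_add_le _ _).trans ?_
      rw [abs_div, abs_div, abs_mul, abs_of_pos (pow_pos ha0 n),
        abs_of_pos (mul_pos (pow_pos ha0 n) (pow_pos hb0 n))]
    have hdn : d ^ ((n:ℝ)) = d ^ n := Real.rpow_natCast d n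
    have heα : (0:ℝ) < e ^ α := Real.rpow_pos_of_pos he0 α
    have hfrac : (0:ℝ) ≤ d ^ n / e ^ α := by positivity
    -- first summand
    have hfirst : d ^ n / e ^ α * (|p - q| / a ^ n) ≤ C * M ^ n := by
      have hdan : d ^ n ≤ M ^ n * a ^ n := by
        calc d ^ n ≤ (M * a) ^ n := pow_le_pow_left₀ hd0.le hda n
          _ = M ^ n * a ^ n := mul_pow M a n
      calc d ^ n / e ^ α * (|p - q| / a ^ n)
          ≤ d ^ n / e ^ α * ((C * e ^ α) / a ^ n) := by gcongr
        _ = C * (d ^ n / a ^ n) := by field_simp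
        _ ≤ C * M ^ n := by
            apply mul_le_mul_of_nonneg_left _ hC0
            rw [div_le_iff₀ (pow_pos ha0 n)]
            exact hdan
    -- second summand
    have hsecond : d ^ n / e ^ α * (|q| * |b ^ n - a ^ n| / (a ^ n * b ^ n)) ≤ K1 := by
      have hnum : |q| * |b ^ n - a ^ n|
          ≤ (2 * C * d ^ α) * ((n:ℝ) * (2*M'*d) ^ (n-1) * (M' * e)) :=
        mul_le_mul hq hban (abs_nonneg _) (by positivity)
      have hden : d ^ n * d ^ n ≤ (M ^ n * (2*M) ^ n) * (a ^ n * b ^ n) := by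
        have h1 : d ^ n ≤ M ^ n * a ^ n := by
          calc d ^ n ≤ (M * a) ^ n := pow_le_pow_left₀ hd0.le hda n
            _ = M ^ n * a ^ n := mul_pow M a n
        have h2 : d ^ n ≤ (2*M) ^ n * b ^ n := by
          calc d ^ n ≤ ((2*M) * b) ^ n := pow_le_pow_left₀ hd0.le (by nlinarith) n
            _ = (2*M) ^ n * b ^ n := mul_pow _ _ n
        calc d ^ n * d ^ n ≤ (M ^ n * a ^ n) * ((2*M) ^ n * b ^ n) :=
              mul_le_mul h1 h2 (by positivity) (by positivity)
          _ = (M ^ n * (2*M) ^ n) * (a ^ n * b ^ n) := by ring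
      set NUM := (2 * C * d ^ α) * ((n:ℝ) * (2*M'*d) ^ (n-1) * (M' * e)) with hNUM
      have hNUMnn : 0 ≤ NUM := by
        rw [hNUM]
        apply mul_nonneg (by positivity)
        apply mul_nonneg (mul_nonneg (Nat.cast_nonneg n) (by positivity)) (by positivity)
      have step1 : |q| * |b ^ n - a ^ n| / (a ^ n * b ^ n) ≤ NUM / (a ^ n * b ^ n) := by
        gcongr
      have step2 : NUM / (a ^ n * b ^ n) ≤ NUM * (M ^ n * (2*M) ^ n) / (d ^ n * d ^ n) := by
        rw [div_le_div_iff₀ (by positivity) (by positivity)]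
        calc NUM * (d ^ n * d ^ n) ≤ NUM * ((M ^ n * (2*M) ^ n) * (a ^ n * b ^ n)) :=
              mul_le_mul_of_nonneg_left hden hNUMnn
          _ = NUM * (M ^ n * (2*M) ^ n) * (a ^ n * b ^ n) := by ring
      have hexp : d ^ n / e ^ α * (NUM * (M ^ n * (2*M) ^ n) / (d ^ n * d ^ n))
          = K1 * ((d ^ α * e * d ^ (n-1)) / (e ^ α * d ^ n)) := by
        rw [hNUM, hK1def, mul_pow (2*M') d (n-1)]
        field_simp
      have hratio : (d ^ α * e * d ^ (n-1)) / (e ^ α * d ^ n) ≤ 1 := by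
        rw [div_le_one (by positivity)]
        have hsplit : d ^ n = d ^ (n-1) * d := by
          rw [← pow_succ, Nat.sub_add_cancel hn]
        have hkey : d ^ α * e ≤ e ^ α * d := rpow_mul_le hα hd0 he0 (by linarith)
        calc d ^ α * e * d ^ (n-1) ≤ e ^ α * d * d ^ (n-1) :=
              mul_le_mul_of_nonneg_right hkey (by positivity)
          _ = e ^ α * d ^ n := by rw [hsplit]; ring
      calc d ^ n / e ^ α * (|q| * |b ^ n - a ^ n| / (a ^ n * b ^ n))
          ≤ d ^ n / e ^ α * (NUM / (a ^ n * b ^ n)) :=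
            mul_le_mul_of_nonneg_left step1 hfrac
        _ ≤ d ^ n / e ^ α * (NUM * (M ^ n * (2*M) ^ n) / (d ^ n * d ^ n)) :=
            mul_le_mul_of_nonneg_left step2 hfrac
        _ = K1 * ((d ^ α * e * d ^ (n-1)) / (e ^ α * d ^ n)) := hexp
        _ ≤ K1 * 1 := mul_le_mul_of_nonneg_left hratio hK1nn
        _ = K1 := mul_one K1
    calc d ^ ((n:ℝ)) / e ^ α * ‖(((p : ℝ)) : ℂ) / ((a ^ n : ℝ) : ℂ)
            - ((q : ℝ) : ℂ) / ((b ^ n : ℝ) : ℂ)‖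
        = d ^ n / e ^ α * |p / a ^ n - q / b ^ n| := by rw [hnorm, hdn]
      _ ≤ d ^ n / e ^ α * (|p - q| / a ^ n + |q| * |b ^ n - a ^ n| / (a ^ n * b ^ n)) :=
          mul_le_mul_of_nonneg_left hPabs hfrac
      _ = d ^ n / e ^ α * (|p - q| / a ^ n)
          + d ^ n / e ^ α * (|q| * |b ^ n - a ^ n| / (a ^ n * b ^ n)) := mul_add _ _ _
      _ ≤ C * M ^ n + K1 := add_le_add hfirst hsecond
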